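/- Let μ be the Gibbs distribution of a polymer model on graph G with m edges, and consider the polymer dynamics Markov chain (pick a uniformly random edge e; with prob. 1/2 remove the unique polymer γ_e containing an endpoint of e if any; with prob. 1/2 sample γ from ν_e and add it if compatible, where ν_e(γ) = w_G(γ) for γ with e ∈ E_γ). Then μ satisfies detailed balance for this chain, and the chain is irreducible and aperiodic; hence μ is its unique stationary distribution. -/

import Mathlib

open scoped Classical

noncomputable section

namespace PolymerDynamics

section Aux

variable {n : Type*} [Fintype n] [DecidableEq n]

lemma aux_pow_nonneg (P : Matrix n n ℝ) (h : ∀ i j, 0 ≤ P i j) :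
    ∀ (k : ℕ) (i j : n), 0 ≤ (P ^ k) i j := by
  intro k
  induction k with
  | zero =>
    intro i j
    rw [pow_zero]
    by_cases hij : i = j <;> simp [Matrix.one_apply, hij]
  | succ k ih =>
    intro i j
    rw [pow_succ, Matrix.mul_apply]
    exact Finset.sum_nonneg fun x _ => mul_nonneg (ih i x) (h x j)

lemma aux_pow_trans (P : Matrix n n ℝ) (h : ∀ i j, 0 ≤ P i j)
    {a b c : n} {j k : ℕ} (h1 : 0 < (P ^ j) a b) (h2 : 0 < (P ^ k) b c) :
    0 < (P ^ (j + k)) a c := by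
  rw [pow_add, Matrix.mul_apply]
  exact Finset.sum_pos'
    (fun x _ => mul_nonneg (aux_pow_nonneg P h j a x) (aux_pow_nonneg P h k x c))
    ⟨b, Finset.mem_univ b, mul_pos h1 h2⟩

end Aux

variable {Pol Edge : Type*} [Fintype Pol] [DecidableEq Pol] [Fintype Edge]
  [DecidableEq Edge]

/-- Polymer configurations: finite sets of mutually compatible polymers. -/
def ValidConfig (compat : Pol → Pol → Prop) (Γ : Finset Pol) : Prop :=
  ∀ γ ∈ Γ, ∀ γ' ∈ Γ, γ ≠ γ' → compat γ γ'

/-- The polymer dynamics on a polymer model (allowed polymers `Pol` with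
positive weights `w`, edge sets `Eγ γ ≠ ∅`, symmetric compatibility relation
`compat`, on a graph with `m` edges): pick a uniformly random edge `e`; with
probability 1/2 remove the unique polymer `γ_e` whose edge set contains `e`
(if any); with probability 1/2 sample `γ` from `ν_e` (where `ν_e(γ) = w(γ)`
for `e ∈ E_γ`, assumed a valid sub-probability distribution) and add it if the
result is compatible.  Thus the transition matrix `P` satisfies
`P(Γ, Γ∖{γ}) = |E_γ|/(2m)` and `P(Γ, Γ∪{γ}) = |E_γ|·w(γ)/(2m)`, all other
off-diagonal entries vanish, and rows sum to 1.  Then the Gibbs distribution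
`μ(Γ) = ∏_{γ∈Γ} w(γ) / Z` satisfies detailed balance for `P`, the chain is
irreducible and aperiodic, and hence `μ` is its unique stationary
distribution. -/
theorem polymer_dynamics_stationary
    (compat : Pol → Pol → Prop) (hsymm : ∀ γ γ', compat γ γ' → compat γ' γ)
    (w : Pol → ℝ) (hw : ∀ γ, 0 < w γ)
    (Eγ : Pol → Finset Edge) (hEne : ∀ γ, (Eγ γ).Nonempty)
    (hdisj : ∀ γ γ', γ ≠ γ' → compat γ γ' → Disjoint (Eγ γ) (Eγ γ'))
    (m : ℕ) (hm : m = Fintype.card Edge)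
    -- ν_e is a valid sub-probability distribution for every edge e
    (hν : ∀ e : Edge, ∑ γ ∈ Finset.univ.filter (fun γ => e ∈ Eγ γ), w γ ≤ 1)
    (P : Matrix {Γ : Finset Pol // ValidConfig compat Γ}
                {Γ : Finset Pol // ValidConfig compat Γ} ℝ)
    (hP0 : ∀ Γ Γ', 0 ≤ P Γ Γ')
    (hProw : ∀ Γ, ∑ Γ', P Γ Γ' = 1)
    (hPrem : ∀ Γ Γ' : {Γ : Finset Pol // ValidConfig compat Γ}, ∀ γ ∈ Γ.1,
      Γ'.1 = Γ.1.erase γ → P Γ Γ' = ((Eγ γ).card : ℝ) / (2 * m))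
    (hPadd : ∀ Γ Γ' : {Γ : Finset Pol // ValidConfig compat Γ}, ∀ γ, γ ∉ Γ.1 →
      Γ'.1 = insert γ Γ.1 → P Γ Γ' = ((Eγ γ).card : ℝ) * w γ / (2 * m))
    (hPoff : ∀ Γ Γ' : {Γ : Finset Pol // ValidConfig compat Γ}, Γ ≠ Γ' →
      (¬∃ γ ∈ Γ.1, Γ'.1 = Γ.1.erase γ) → (¬∃ γ ∉ Γ.1, Γ'.1 = insert γ Γ.1) →
      P Γ Γ' = 0)
    (Z : ℝ) (hZ : Z = ∑ Γ : {Γ : Finset Pol // ValidConfig compat Γ}, ∏ γ ∈ Γ.1, w γ)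
    (μ : {Γ : Finset Pol // ValidConfig compat Γ} → ℝ)
    (hμ : ∀ Γ, μ Γ = (∏ γ ∈ Γ.1, w γ) / Z) :
    -- detailed balance
    (∀ Γ Γ', μ Γ * P Γ Γ' = μ Γ' * P Γ' Γ) ∧
      -- irreducibility
      (∀ Γ Γ', ∃ k : ℕ, 0 < (P ^ k) Γ Γ') ∧
      -- aperiodicity (self-loops)
      (∀ Γ, 0 < P Γ Γ) ∧
      -- μ is the unique stationary distribution
      (∀ Γ', ∑ Γ, μ Γ * P Γ Γ' = μ Γ') ∧
      ∀ π : {Γ : Finset Pol // ValidConfig compat Γ} → ℝ,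
        (∀ Γ, 0 ≤ π Γ) → (∑ Γ, π Γ = 1) →
        (∀ Γ', ∑ Γ, π Γ * P Γ Γ' = π Γ') → π = μ := by
  -- basic facts about configurations
  have hvsub : ∀ (s t : Finset Pol), t ⊆ s → ValidConfig compat s →
      ValidConfig compat t := fun s t hts hs γ hγ γ' hγ' hne =>
    hs γ (hts hγ) γ' (hts hγ') hne
  have hvempty : ValidConfig compat (∅ : Finset Pol) := fun γ hγ =>
    absurd hγ (Finset.notMem_empty γ)
  let E0 : {Γ : Finset Pol // ValidConfig compat Γ} := ⟨∅, hvempty⟩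
  have hm0 : ∀ (_ : Pol), (0 : ℝ) < 2 * m := by
    intro γ
    obtain ⟨e, _⟩ := hEne γ
    have : 0 < m := hm ▸ Fintype.card_pos_iff.mpr ⟨e⟩
    have : (0:ℝ) < m := by exact_mod_cast this
    linarith
  have hcardpos : ∀ γ : Pol, (0:ℝ) < ((Eγ γ).card : ℝ) := by
    intro γ
    exact_mod_cast Finset.card_pos.mpr (hEne γ)
  -- detailed balance
  have hDB : ∀ Γ Γ', μ Γ * P Γ Γ' = μ Γ' * P Γ' Γ := by
    intro Γ Γ'
    by_cases hee : Γ = Γ'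
    · rw [hee]
    by_cases h1 : ∃ γ ∈ Γ.1, Γ'.1 = Γ.1.erase γ
    · obtain ⟨γ, hγ, he⟩ := h1
      have hnotmem : γ ∉ Γ'.1 := by rw [he]; exact Finset.notMem_erase γ Γ.1
      have hins : Γ.1 = insert γ Γ'.1 := by rw [he, Finset.insert_erase hγ]
      rw [hPrem Γ Γ' γ hγ he, hPadd Γ' Γ γ hnotmem hins, hμ Γ, hμ Γ',
        ← Finset.mul_prod_erase Γ.1 w hγ, ← he]
      ring
    by_cases h2 : ∃ γ ∉ Γ.1, Γ'.1 = insert γ Γ.1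
    · obtain ⟨γ, hγ, hi⟩ := h2
      have hmem : γ ∈ Γ'.1 := by rw [hi]; exact Finset.mem_insert_self γ Γ.1
      have herase : Γ.1 = Γ'.1.erase γ := by rw [hi, Finset.erase_insert hγ]
      rw [hPadd Γ Γ' γ hγ hi, hPrem Γ' Γ γ hmem herase, hμ Γ, hμ Γ',
        ← Finset.mul_prod_erase Γ'.1 w hmem, ← herase]
      ring
    · have hee' : Γ' ≠ Γ := fun h => hee h.symm
      have h1' : ¬∃ γ ∈ Γ'.1, Γ.1 = Γ'.1.erase γ := by
        rintro ⟨γ, hγ, he⟩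
        exact h2 ⟨γ, by rw [he]; exact Finset.notMem_erase γ Γ'.1,
          by rw [he, Finset.insert_erase hγ]⟩
      have h2' : ¬∃ γ ∉ Γ'.1, Γ.1 = insert γ Γ'.1 := by
        rintro ⟨γ, hγ, hi⟩
        exact h1 ⟨γ, by rw [hi]; exact Finset.mem_insert_self γ Γ'.1,
          by rw [hi, Finset.erase_insert hγ]⟩
      rw [hPoff Γ Γ' hee h1 h2, hPoff Γ' Γ hee' h1' h2']
      ring
  -- self-loops
  have hself : ∀ Γ, 0 < P Γ Γ := by
    intro Γ
    have hrow := hProw Γ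
    rw [← Finset.add_sum_erase Finset.univ _ (Finset.mem_univ Γ)] at hrow
    have hoff : ∑ Γ' ∈ Finset.univ.erase Γ, P Γ Γ' ≤ 1/2 := by
      by_cases hpol : Nonempty Pol
      swap
      · have hz : ∀ Γ' ∈ Finset.univ.erase Γ, P Γ Γ' = 0 := by
          intro Γ' hΓ'
          have hne : Γ ≠ Γ' := (Finset.ne_of_mem_erase hΓ').symm
          exact hPoff Γ Γ' hne (by rintro ⟨γ, -, -⟩; exact hpol ⟨γ⟩)
            (by rintro ⟨γ, -, -⟩; exact hpol ⟨γ⟩)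
        rw [Finset.sum_eq_zero hz]; norm_num
      obtain ⟨γ0⟩ := hpol
      have h2m : (0:ℝ) < 2 * m := hm0 γ0
      -- the map sending a polymer to the corresponding neighbouring configuration
      set ι : Pol → Finset Pol := fun γ =>
        if γ ∈ Γ.1 then Γ.1.erase γ else insert γ Γ.1 with hι
      have hιinj : ∀ γ γ', ι γ = ι γ' → γ = γ' := by
        intro γ γ' h
        by_cases hγ : γ ∈ Γ.1 <;> by_cases hγ' : γ' ∈ Γ.1 <;>
          simp only [hι, hγ, hγ', if_pos, if_neg, if_true, if_false] at h
        · by_contra hne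
          have : γ' ∈ Γ.1.erase γ := Finset.mem_erase.mpr ⟨fun hh => hne hh.symm, hγ'⟩
          rw [h] at this
          exact (Finset.notMem_erase γ' Γ.1) this
        · exfalso
          have : γ' ∈ Γ.1.erase γ := by
            rw [h]; exact Finset.mem_insert_self γ' Γ.1
          exact hγ' (Finset.mem_of_mem_erase this)
        · exfalso
          have : γ ∈ Γ.1.erase γ' := by
            rw [← h]; exact Finset.mem_insert_self γ Γ.1
          exact hγ (Finset.mem_of_mem_erase this)
        · have : γ ∈ insert γ' Γ.1 := by rw [← h]; exact Finset.mem_insert_self γ Γ.1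
          rcases Finset.mem_insert.mp this with h' | h'
          · exact h'
          · exact absurd h' hγ
      set B : Pol → ℝ := fun γ =>
        if h : ValidConfig compat (ι γ) then P Γ ⟨ι γ, h⟩ else 0 with hB
      have hBnn : ∀ γ, 0 ≤ B γ := by
        intro γ
        simp only [hB]
        by_cases h : ValidConfig compat (ι γ)
        · rw [dif_pos h]; exact hP0 _ _
        · rw [dif_neg h]
      set sel : {Γ : Finset Pol // ValidConfig compat Γ} → Pol := fun Γ' =>
        if h : ∃ γ, Γ'.1 = ι γ then h.choose else γ0 with hsel
      have hselspec : ∀ Γ' : {Γ : Finset Pol // ValidConfig compat Γ}, (∃ γ, Γ'.1 = ι γ) → Γ'.1 = ι (sel Γ') := by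
        intro Γ' h
        rw [hsel]
        simp only [dif_pos h]
        exact h.choose_spec
      -- every off-diagonal configuration with nonzero weight is a neighbour
      have hcase : ∀ Γ' ∈ (Finset.univ.erase Γ).filter (fun Γ' => P Γ Γ' ≠ 0),
          ∃ γ, Γ'.1 = ι γ := by
        intro Γ' hΓ'
        rw [Finset.mem_filter] at hΓ'
        have hne : Γ ≠ Γ' := (Finset.ne_of_mem_erase hΓ'.1).symm
        by_contra hno
        apply hΓ'.2
        apply hPoff Γ Γ' hne
        · rintro ⟨γ, hγ, he⟩
          exact hno ⟨γ, by rw [he, hι]; simp [hγ]⟩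
        · rintro ⟨γ, hγ, hi⟩
          exact hno ⟨γ, by rw [hi, hι]; simp [hγ]⟩
      have hsum1 : ∑ Γ' ∈ Finset.univ.erase Γ, P Γ Γ' =
          ∑ Γ' ∈ (Finset.univ.erase Γ).filter (fun Γ' => P Γ Γ' ≠ 0), P Γ Γ' :=
        (Finset.sum_filter_ne_zero _).symm
      have hsum2 : ∑ Γ' ∈ (Finset.univ.erase Γ).filter (fun Γ' => P Γ Γ' ≠ 0), P Γ Γ'
          ≤ ∑ γ : Pol, B γ := by
        have heq : ∀ Γ' ∈ (Finset.univ.erase Γ).filter (fun Γ' => P Γ Γ' ≠ 0),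
            B (sel Γ') = P Γ Γ' := by
          intro Γ' hΓ'
          have hval : Γ'.1 = ι (sel Γ') := hselspec Γ' (hcase Γ' hΓ')
          have hvc : ValidConfig compat (ι (sel Γ')) := hval ▸ Γ'.2
          have hst : (⟨ι (sel Γ'), hvc⟩ : {Γ : Finset Pol // ValidConfig compat Γ}) = Γ' := Subtype.ext hval.symm
          rw [hB]
          simp only [dif_pos hvc]
          rw [hst]
        calc ∑ Γ' ∈ (Finset.univ.erase Γ).filter (fun Γ' => P Γ Γ' ≠ 0), P Γ Γ'
            = ∑ Γ' ∈ (Finset.univ.erase Γ).filter (fun Γ' => P Γ Γ' ≠ 0), B (sel Γ') :=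
              (Finset.sum_congr rfl heq).symm
          _ = ∑ γ ∈ ((Finset.univ.erase Γ).filter (fun Γ' => P Γ Γ' ≠ 0)).image sel,
                B γ := by
              rw [Finset.sum_image]
              intro x hx y hy hxy
              have hx' := hselspec x (hcase x hx)
              have hy' := hselspec y (hcase y hy)
              apply Subtype.ext
              rw [hx', hy', hxy]
          _ ≤ ∑ γ : Pol, B γ :=
              Finset.sum_le_sum_of_subset_of_nonneg (Finset.subset_univ _)
                (fun γ _ _ => hBnn γ)
      -- now bound the sum of B
      set A : Finset Edge := Γ.1.biUnion Eγ with hA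
      have hcardA : (A.card : ℝ) = ∑ γ ∈ Γ.1, ((Eγ γ).card : ℝ) := by
        rw [hA, Finset.card_biUnion]
        · push_cast; ring
        · intro γ hγ γ' hγ' hne
          exact hdisj γ γ' hne (Γ.2 γ hγ γ' hγ' hne)
      set Add : Finset Pol := Finset.univ.filter
        (fun γ => γ ∉ Γ.1 ∧ ValidConfig compat (insert γ Γ.1)) with hAdd
      -- split the sum of B
      have hBmem : ∀ γ ∈ Γ.1, B γ = ((Eγ γ).card : ℝ) / (2 * m) := by
        intro γ hγ
        have hιγ : ι γ = Γ.1.erase γ := by rw [hι]; simp [hγ]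
        have hvc : ValidConfig compat (ι γ) := by
          rw [hιγ]; exact hvsub Γ.1 _ (Finset.erase_subset γ Γ.1) Γ.2
        rw [hB]
        simp only [dif_pos hvc]
        exact hPrem Γ ⟨ι γ, hvc⟩ γ hγ hιγ
      have hBadd : ∀ γ ∈ Add, B γ = ((Eγ γ).card : ℝ) * w γ / (2 * m) := by
        intro γ hγ
        rw [hAdd, Finset.mem_filter] at hγ
        obtain ⟨-, hγnot, hγval⟩ := hγ
        have hιγ : ι γ = insert γ Γ.1 := by rw [hι]; simp [hγnot]
        have hvc : ValidConfig compat (ι γ) := by rw [hιγ]; exact hγval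
        rw [hB]
        simp only [dif_pos hvc]
        exact hPadd Γ ⟨ι γ, hvc⟩ γ hγnot hιγ
      have hBzero : ∀ γ, γ ∉ Γ.1 → γ ∉ Add → B γ = 0 := by
        intro γ hγnot hγadd
        have hnv : ¬ ValidConfig compat (ι γ) := by
          intro hv
          apply hγadd
          rw [hAdd, Finset.mem_filter]
          refine ⟨Finset.mem_univ γ, hγnot, ?_⟩
          simp only [hι] at hv
          rwa [if_neg hγnot] at hv
        simp only [hB]
        rw [dif_neg hnv]
      -- disjointness of added polymers from A
      have haddA : ∀ γ ∈ Add, ∀ e ∈ Eγ γ, e ∉ A := by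
        intro γ hγ e he heA
        rw [hAdd, Finset.mem_filter] at hγ
        obtain ⟨-, hγnot, hγval⟩ := hγ
        rw [hA, Finset.mem_biUnion] at heA
        obtain ⟨γ', hγ', he'⟩ := heA
        have hne : γ ≠ γ' := fun h => hγnot (h ▸ hγ')
        have hcompat : compat γ γ' := hγval γ (Finset.mem_insert_self γ Γ.1)
          γ' (Finset.mem_insert_of_mem hγ') hne
        exact (Finset.disjoint_left.mp (hdisj γ γ' hne hcompat)) he he'
      -- key inequality for added polymers
      have hkey : ∑ γ ∈ Add, ((Eγ γ).card : ℝ) * w γ ≤ (m : ℝ) - A.card := by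
        have hswap : ∑ γ ∈ Add, ((Eγ γ).card : ℝ) * w γ =
            ∑ e : Edge, ∑ γ ∈ Add, (if e ∈ Eγ γ then w γ else 0) := by
          rw [Finset.sum_comm]
          apply Finset.sum_congr rfl
          intro γ _
          rw [← Finset.sum_filter, Finset.filter_univ_mem, Finset.sum_const,
            nsmul_eq_mul]
        set g : Edge → ℝ := fun e => ∑ γ ∈ Add, (if e ∈ Eγ γ then w γ else 0) with hg
        have hgA : ∀ e ∈ A, g e = 0 := by
          intro e heA
          rw [hg]
          apply Finset.sum_eq_zero
          intro γ hγ
          rw [if_neg]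
          intro he
          exact haddA γ hγ e he heA
        have hg1 : ∀ e : Edge, g e ≤ 1 := by
          intro e
          rw [hg]
          calc ∑ γ ∈ Add, (if e ∈ Eγ γ then w γ else 0)
              = ∑ γ ∈ Add.filter (fun γ => e ∈ Eγ γ), w γ := (Finset.sum_filter _ _).symm
            _ ≤ ∑ γ ∈ Finset.univ.filter (fun γ => e ∈ Eγ γ), w γ :=
                Finset.sum_le_sum_of_subset_of_nonneg
                  (Finset.filter_subset_filter _ (Finset.subset_univ Add))
                  (fun γ _ _ => (hw γ).le)
            _ ≤ 1 := hν e
        have hsplit : ∑ e : Edge, g e = ∑ e ∈ Finset.univ \ A, g e + ∑ e ∈ A, g e :=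
          (Finset.sum_sdiff (Finset.subset_univ A)).symm
        have hAzero : ∑ e ∈ A, g e = 0 := Finset.sum_eq_zero hgA
        have hbound : ∑ e ∈ Finset.univ \ A, g e ≤ ((Finset.univ \ A).card : ℝ) := by
          calc ∑ e ∈ Finset.univ \ A, g e ≤ ∑ _e ∈ Finset.univ \ A, (1:ℝ) :=
              Finset.sum_le_sum (fun e _ => hg1 e)
            _ = ((Finset.univ \ A).card : ℝ) := by rw [Finset.sum_const, nsmul_eq_mul]; ring
        have hcard : ((Finset.univ \ A).card : ℝ) = (m : ℝ) - A.card := by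
          rw [Finset.card_sdiff_of_subset (Finset.subset_univ A), Finset.card_univ, ← hm,
            Nat.cast_sub]
          rw [hm]
          exact Finset.card_le_univ A
        rw [hswap]
        calc ∑ e : Edge, g e = ∑ e ∈ Finset.univ \ A, g e + ∑ e ∈ A, g e := hsplit
          _ = ∑ e ∈ Finset.univ \ A, g e := by rw [hAzero, add_zero]
          _ ≤ ((Finset.univ \ A).card : ℝ) := hbound
          _ = (m : ℝ) - A.card := hcard
      -- assemble the bound on ∑ B
      have hBsum : ∑ γ : Pol, B γ ≤ 1/2 := by
        have hsplitB : ∑ γ : Pol, B γ = ∑ γ ∈ Γ.1, B γ + ∑ γ ∈ Finset.univ \ Γ.1, B γ := by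
          rw [add_comm, Finset.sum_sdiff (Finset.subset_univ Γ.1)]
        have h1 : ∑ γ ∈ Γ.1, B γ = (A.card : ℝ) / (2 * m) := by
          rw [Finset.sum_congr rfl hBmem, hcardA, Finset.sum_div]
        have hAddsub : Add ⊆ Finset.univ \ Γ.1 := by
          intro γ hγ
          rw [hAdd, Finset.mem_filter] at hγ
          exact Finset.mem_sdiff.mpr ⟨Finset.mem_univ γ, hγ.2.1⟩
        have h2 : ∑ γ ∈ Finset.univ \ Γ.1, B γ = ∑ γ ∈ Add, B γ := by
          apply (Finset.sum_subset hAddsub ?_).symm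
          intro γ hγ hγadd
          exact hBzero γ (Finset.mem_sdiff.mp hγ).2 hγadd
        have h3 : ∑ γ ∈ Add, B γ = (∑ γ ∈ Add, ((Eγ γ).card : ℝ) * w γ) / (2 * m) := by
          rw [Finset.sum_congr rfl hBadd, Finset.sum_div]
        rw [hsplitB, h1, h2, h3]
        rw [← add_div]
        rw [div_le_iff₀ h2m]
        have := hkey
        have hA_le : (A.card : ℝ) ≤ m := by
          have := Finset.card_le_univ A
          rw [← hm] at this
          exact_mod_cast this
        nlinarith [hkey]
      calc ∑ Γ' ∈ Finset.univ.erase Γ, P Γ Γ'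
          = ∑ Γ' ∈ (Finset.univ.erase Γ).filter (fun Γ' => P Γ Γ' ≠ 0), P Γ Γ' := hsum1
        _ ≤ ∑ γ : Pol, B γ := hsum2
        _ ≤ 1/2 := hBsum
    linarith
  -- reachability
  have hreach0 : ∀ (n : ℕ) (Γ : {Γ : Finset Pol // ValidConfig compat Γ}), Γ.1.card = n → ∃ k, 0 < (P ^ k) Γ E0 := by
    intro n
    induction n with
    | zero =>
      intro Γ hΓ
      have : Γ = E0 := Subtype.ext (Finset.card_eq_zero.mp hΓ)
      refine ⟨0, ?_⟩
      rw [this, pow_zero, Matrix.one_apply_eq]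
      norm_num
    | succ n ih =>
      intro Γ hΓ
      have hne : Γ.1.Nonempty := Finset.card_pos.mp (by omega)
      obtain ⟨γ, hγ⟩ := hne
      have hval : ValidConfig compat (Γ.1.erase γ) :=
        hvsub Γ.1 _ (Finset.erase_subset γ Γ.1) Γ.2
      set Γ'' : {Γ : Finset Pol // ValidConfig compat Γ} := ⟨Γ.1.erase γ, hval⟩
      have hcard : Γ''.1.card = n := by
        simp only [Γ'']
        rw [Finset.card_erase_of_mem hγ, hΓ]
        omega
      obtain ⟨k, hk⟩ := ih Γ'' hcard
      have hstep : 0 < P Γ Γ'' := by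
        rw [hPrem Γ Γ'' γ hγ rfl]
        exact div_pos (hcardpos γ) (hm0 γ)
      refine ⟨1 + k, ?_⟩
      have hstep' : 0 < (P ^ 1) Γ Γ'' := by rwa [pow_one]
      exact aux_pow_trans P hP0 hstep' hk
  have hreach1 : ∀ (n : ℕ) (Γ' : {Γ : Finset Pol // ValidConfig compat Γ}), Γ'.1.card = n → ∃ k, 0 < (P ^ k) E0 Γ' := by
    intro n
    induction n with
    | zero =>
      intro Γ' hΓ'
      have : Γ' = E0 := Subtype.ext (Finset.card_eq_zero.mp hΓ')
      refine ⟨0, ?_⟩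
      rw [this, pow_zero, Matrix.one_apply_eq]
      norm_num
    | succ n ih =>
      intro Γ' hΓ'
      have hne : Γ'.1.Nonempty := Finset.card_pos.mp (by omega)
      obtain ⟨γ, hγ⟩ := hne
      have hval : ValidConfig compat (Γ'.1.erase γ) :=
        hvsub Γ'.1 _ (Finset.erase_subset γ Γ'.1) Γ'.2
      set Γ'' : {Γ : Finset Pol // ValidConfig compat Γ} := ⟨Γ'.1.erase γ, hval⟩
      have hcard : Γ''.1.card = n := by
        simp only [Γ'']
        rw [Finset.card_erase_of_mem hγ, hΓ']
        omega
      obtain ⟨k, hk⟩ := ih Γ'' hcard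
      have hstep : 0 < P Γ'' Γ' := by
        rw [hPadd Γ'' Γ' γ (Finset.notMem_erase γ Γ'.1)
          (Finset.insert_erase hγ).symm]
        exact div_pos (mul_pos (hcardpos γ) (hw γ)) (hm0 γ)
      refine ⟨k + 1, ?_⟩
      have hstep' : 0 < (P ^ 1) Γ'' Γ' := by rwa [pow_one]
      exact aux_pow_trans P hP0 hk hstep'
  have hirr : ∀ Γ Γ' : {Γ : Finset Pol // ValidConfig compat Γ}, ∃ k : ℕ, 0 < (P ^ k) Γ Γ' := by
    intro Γ Γ'
    obtain ⟨j, hj⟩ := hreach0 Γ.1.card Γ rfl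
    obtain ⟨k, hk⟩ := hreach1 Γ'.1.card Γ' rfl
    exact ⟨j + k, aux_pow_trans P hP0 hj hk⟩
  -- positivity of μ
  have hZpos : 0 < Z := by
    rw [hZ]
    exact Finset.sum_pos (fun Γ _ => Finset.prod_pos fun γ _ => hw γ)
      ⟨E0, Finset.mem_univ E0⟩
  have hμpos : ∀ Γ, 0 < μ Γ := by
    intro Γ
    rw [hμ Γ]
    exact div_pos (Finset.prod_pos fun γ _ => hw γ) hZpos
  have hμsum : ∑ Γ : {Γ : Finset Pol // ValidConfig compat Γ}, μ Γ = 1 := by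
    have : ∑ Γ : {Γ : Finset Pol // ValidConfig compat Γ}, μ Γ = (∑ Γ : {Γ : Finset Pol // ValidConfig compat Γ}, ∏ γ ∈ Γ.1, w γ) / Z := by
      rw [Finset.sum_div]
      exact Finset.sum_congr rfl fun Γ _ => hμ Γ
    rw [this, ← hZ, div_self hZpos.ne']
  -- stationarity
  have hstat : ∀ Γ', ∑ Γ, μ Γ * P Γ Γ' = μ Γ' := by
    intro Γ'
    calc ∑ Γ, μ Γ * P Γ Γ' = ∑ Γ, μ Γ' * P Γ' Γ :=
        Finset.sum_congr rfl fun Γ _ => hDB Γ Γ'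
      _ = μ Γ' * ∑ Γ, P Γ' Γ := by rw [Finset.mul_sum]
      _ = μ Γ' := by rw [hProw Γ', mul_one]
  refine ⟨hDB, hirr, hself, hstat, ?_⟩
  -- uniqueness
  intro π hπ0 hπsum hπstat
  set f : {Γ : Finset Pol // ValidConfig compat Γ} → ℝ := fun Γ => π Γ / μ Γ with hf
  have hfμ : ∀ Γ, f Γ * μ Γ = π Γ := fun Γ =>
    div_mul_cancel₀ (π Γ) (hμpos Γ).ne'
  have hharm : ∀ Γ', ∑ Γ, P Γ' Γ * f Γ = f Γ' := by
    intro Γ'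
    have h1 : ∑ Γ, f Γ * (μ Γ * P Γ Γ') = π Γ' :=
      (Finset.sum_congr rfl fun Γ _ => by rw [← mul_assoc, hfμ Γ]).trans (hπstat Γ')
    have h2 : ∑ Γ, f Γ * (μ Γ * P Γ Γ') = μ Γ' * ∑ Γ, P Γ' Γ * f Γ := by
      rw [Finset.mul_sum]
      exact Finset.sum_congr rfl fun Γ _ => by rw [hDB Γ Γ']; ring
    apply mul_left_cancel₀ (hμpos Γ').ne'
    rw [← h2, h1, ← hfμ Γ']
    ring
  -- maximum principle
  obtain ⟨Γs, -, hmax⟩ := Finset.exists_max_image Finset.univ f ⟨E0, Finset.mem_univ E0⟩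
  have hmax' : ∀ Γ, f Γ ≤ f Γs := fun Γ => hmax Γ (Finset.mem_univ Γ)
  set M := f Γs with hM
  have hlocal : ∀ x : {Γ : Finset Pol // ValidConfig compat Γ}, f x = M → ∀ y : {Γ : Finset Pol // ValidConfig compat Γ}, 0 < P x y → f y = M := by
    intro x hx y hPxy
    by_contra hne
    have hylt : f y < M := lt_of_le_of_ne (hmax' y) hne
    have hlt : ∑ Γ, P x Γ * f Γ < ∑ Γ, P x Γ * M := by
      apply Finset.sum_lt_sum
      · intro Γ _
        exact mul_le_mul_of_nonneg_left (hmax' Γ) (hP0 x Γ)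
      · exact ⟨y, Finset.mem_univ y, mul_lt_mul_of_pos_left hylt hPxy⟩
    rw [hharm x, hx, ← Finset.sum_mul, hProw x, one_mul] at hlt
    exact lt_irrefl M hlt
  have hallM : ∀ (k : ℕ) (Γ : {Γ : Finset Pol // ValidConfig compat Γ}), 0 < (P ^ k) Γs Γ → f Γ = M := by
    intro k
    induction k with
    | zero =>
      intro Γ hΓ
      by_cases h : Γs = Γ
      · rw [← h]
      · rw [pow_zero, Matrix.one_apply_ne h] at hΓ
        exact absurd hΓ (lt_irrefl 0)
    | succ k ih =>
      intro Γ hΓ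
      rw [pow_succ, Matrix.mul_apply] at hΓ
      have hex : ∃ x, 0 < (P ^ k) Γs x * P x Γ := by
        by_contra hno
        push_neg at hno
        have : ∑ x, (P ^ k) Γs x * P x Γ ≤ 0 :=
          Finset.sum_nonpos fun x _ => hno x
        linarith
      obtain ⟨x, hx⟩ := hex
      have hx1 : 0 < (P ^ k) Γs x := by
        rcases mul_pos_iff.mp hx with ⟨h1, -⟩ | ⟨h1, -⟩
        · exact h1
        · exact absurd h1 (not_lt.mpr (aux_pow_nonneg P hP0 k Γs x))
      have hx2 : 0 < P x Γ := by
        rcases mul_pos_iff.mp hx with ⟨-, h2⟩ | ⟨-, h2⟩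
        · exact h2
        · exact absurd h2 (not_lt.mpr (hP0 x Γ))
      exact hlocal x (ih x hx1) Γ hx2
  have hfM : ∀ Γ, f Γ = M := by
    intro Γ
    obtain ⟨k, hk⟩ := hirr Γs Γ
    exact hallM k Γ hk
  have hπμ : ∀ Γ, π Γ = M * μ Γ := by
    intro Γ
    rw [← hfμ Γ, hfM Γ]
  have hM1 : M = 1 := by
    have : ∑ Γ : {Γ : Finset Pol // ValidConfig compat Γ}, π Γ = M * ∑ Γ : {Γ : Finset Pol // ValidConfig compat Γ}, μ Γ := by
      rw [Finset.mul_sum]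
      exact Finset.sum_congr rfl fun Γ _ => hπμ Γ
    rw [hπsum, hμsum, mul_one] at this
    exact this.symm
  funext Γ
  rw [hπμ Γ, hM1, one_mul]

end PolymerDynamics
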